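/- In the setting of the previous statement (gates f, iGate, g and cell state c w i = (f w i)·(cprev w i) + (iGate w i)·(g w i), with ψ and k as defined there), additionally let Wo : ℝ → Matrix (Fin n) (Fin k) ℝ have entrywise derivative Eo at w₀, bo : Fin n → ℝ, define the output gate o w i = σ(((Wo w).mulVec (v w)) i + bo i) and the hidden state h w i = (o w i)·tanh(c w i). Write Δc = diag(o w₀ ⊙ (1 − tanh(c w₀)²)) and Δo = diag(o w₀ ⊙ (1 − o w₀) ⊙ tanh(c w₀)) (all operations entrywise), and set F̃ = Δc ⬝ diag(f w₀), ψ̃ = Δo ⬝ (Wo w₀) + Δc ⬝ ψ, and k̃ = Δo.mulVec (Eo.mulVec (v w₀)) + Δc.mulVec k. Then for every i, the function w ↦ h w i has derivative (F̃.mulVec c') i + (ψ̃.mulVec v') i + k̃ i at w₀. -/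

import Mathlib

noncomputable def sigmoid (x : ℝ) : ℝ := 1 / (1 + Real.exp (-x))

lemma hasDerivAt_sigmoid (x : ℝ) :
    HasDerivAt sigmoid (sigmoid x * (1 - sigmoid x)) x := by
  have hne : (1 : ℝ) + Real.exp (-x) ≠ 0 := by positivity
  have h1 : HasDerivAt (fun y : ℝ => 1 + Real.exp (-y)) (-Real.exp (-x)) x := by
    simpa using (((Real.hasDerivAt_exp (-x)).comp x ((hasDerivAt_id x).neg)).const_add 1)
  have h2 := h1.inv hne
  have h3 : HasDerivAt (fun y : ℝ => sigmoid y)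
      (Real.exp (-x) / (1 + Real.exp (-x)) ^ 2) x := by
    simp only [sigmoid, one_div]
    simpa [Pi.inv_def] using h2
  convert h3 using 1
  simp only [sigmoid]
  field_simp
  ring

lemma hasDerivAt_tanh (x : ℝ) :
    HasDerivAt Real.tanh (1 - Real.tanh x ^ 2) x := by
  have hc : Real.cosh x ≠ 0 := (Real.cosh_pos x).ne'
  have h := (Real.hasDerivAt_sinh x).div (Real.hasDerivAt_cosh x) hc
  have h3 : HasDerivAt (fun y => Real.tanh y)
      ((Real.cosh x * Real.cosh x - Real.sinh x * Real.sinh x) / Real.cosh x ^ 2) x := by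
    simp only [Real.tanh_eq_sinh_div_cosh]
    exact h
  convert h3 using 1
  rw [Real.tanh_eq_sinh_div_cosh]
  have h4 := Real.cosh_sq_sub_sinh_sq x
  field_simp

lemma mulVec_hasDerivAt {n k : ℕ} (w₀ : ℝ)
    (W : ℝ → Matrix (Fin n) (Fin k) ℝ) (E : Matrix (Fin n) (Fin k) ℝ)
    (hW : ∀ i j, HasDerivAt (fun w => W w i j) (E i j) w₀)
    (v : ℝ → Fin k → ℝ) (v' : Fin k → ℝ)
    (hv : ∀ j, HasDerivAt (fun w => v w j) (v' j) w₀) (i : Fin n) :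
    HasDerivAt (fun w => ((W w).mulVec (v w)) i)
      ((E.mulVec (v w₀)) i + ((W w₀).mulVec v') i) w₀ := by
  have h : HasDerivAt (fun w => ∑ j, W w i j * v w j)
      (∑ j, (E i j * v w₀ j + W w₀ i j * v' j)) w₀ :=
    HasDerivAt.fun_sum fun j _ => (hW i j).mul (hv j)
  simpa [Matrix.mulVec, dotProduct, Finset.sum_add_distrib] using h

/-- Corollary 3 of the paper: derivative of the LSTM hidden state
`h w i = o w i * tanh (c w i)` with cell state
`c w i = f w i * cprev w i + iGate w i * g w i`, expressed as
`dh/dw = F̃ ⬝ c' + ψ̃ ⬝ v' + k̃`. -/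
theorem lstm_hidden_state_recursion_hasDerivAt
    (n k : ℕ) (hn : 0 < n) (hk : 0 < k) (w₀ : ℝ)
    (Wf Wi Wg Wo : ℝ → Matrix (Fin n) (Fin k) ℝ)
    (Ef Ei Eg Eo : Matrix (Fin n) (Fin k) ℝ)
    (hWf : ∀ i j, HasDerivAt (fun w => Wf w i j) (Ef i j) w₀)
    (hWi : ∀ i j, HasDerivAt (fun w => Wi w i j) (Ei i j) w₀)
    (hWg : ∀ i j, HasDerivAt (fun w => Wg w i j) (Eg i j) w₀)
    (hWo : ∀ i j, HasDerivAt (fun w => Wo w i j) (Eo i j) w₀)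
    (bf bi bg bo : Fin n → ℝ)
    (v : ℝ → Fin k → ℝ) (v' : Fin k → ℝ)
    (hv : ∀ j, HasDerivAt (fun w => v w j) (v' j) w₀)
    (cprev : ℝ → Fin n → ℝ) (c' : Fin n → ℝ)
    (hcprev : ∀ i, HasDerivAt (fun w => cprev w i) (c' i) w₀)
    (f iGate g o c h : ℝ → Fin n → ℝ)
    (hf : ∀ w i, f w i = sigmoid (((Wf w).mulVec (v w)) i + bf i))
    (hi : ∀ w i, iGate w i = sigmoid (((Wi w).mulVec (v w)) i + bi i))
    (hg : ∀ w i, g w i = Real.tanh (((Wg w).mulVec (v w)) i + bg i))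
    (ho : ∀ w i, o w i = sigmoid (((Wo w).mulVec (v w)) i + bo i))
    (hc : ∀ w i, c w i = f w i * cprev w i + iGate w i * g w i)
    (hh : ∀ w i, h w i = o w i * Real.tanh (c w i))
    (ψ : Matrix (Fin n) (Fin k) ℝ) (kvec : Fin n → ℝ)
    (hψ : ψ =
        Matrix.diagonal (fun j => f w₀ j * (1 - f w₀ j) * cprev w₀ j) * Wf w₀
      + Matrix.diagonal (fun j => (1 - (g w₀ j) ^ 2) * iGate w₀ j) * Wg w₀
      + Matrix.diagonal (fun j => iGate w₀ j * (1 - iGate w₀ j) * g w₀ j) * Wi w₀)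
    (hkvec : kvec =
        (Matrix.diagonal (fun j => f w₀ j * (1 - f w₀ j) * cprev w₀ j)).mulVec
          (Ef.mulVec (v w₀))
      + (Matrix.diagonal (fun j => (1 - (g w₀ j) ^ 2) * iGate w₀ j)).mulVec
          (Eg.mulVec (v w₀))
      + (Matrix.diagonal (fun j => iGate w₀ j * (1 - iGate w₀ j) * g w₀ j)).mulVec
          (Ei.mulVec (v w₀)))
    (Δc Δo : Matrix (Fin n) (Fin n) ℝ)
    (hΔc : Δc = Matrix.diagonal (fun j => o w₀ j * (1 - Real.tanh (c w₀ j) ^ 2)))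
    (hΔo : Δo = Matrix.diagonal (fun j => o w₀ j * (1 - o w₀ j) * Real.tanh (c w₀ j)))
    (F' : Matrix (Fin n) (Fin n) ℝ) (ψ' : Matrix (Fin n) (Fin k) ℝ) (kvec' : Fin n → ℝ)
    (hF' : F' = Δc * Matrix.diagonal (f w₀))
    (hψ' : ψ' = Δo * Wo w₀ + Δc * ψ)
    (hkvec' : kvec' = Δo.mulVec (Eo.mulVec (v w₀)) + Δc.mulVec kvec) :
    ∀ i, HasDerivAt (fun w => h w i)
      ((F'.mulVec c') i + (ψ'.mulVec v') i + kvec' i) w₀ := by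
  intro i
  -- derivatives of the pre-activations
  have hzf := mulVec_hasDerivAt w₀ Wf Ef hWf v v' hv i
  have hzi := mulVec_hasDerivAt w₀ Wi Ei hWi v v' hv i
  have hzg := mulVec_hasDerivAt w₀ Wg Eg hWg v v' hv i
  have hzo := mulVec_hasDerivAt w₀ Wo Eo hWo v v' hv i
  set zf := (Ef.mulVec (v w₀)) i + ((Wf w₀).mulVec v') i with hzf_def
  set zi := (Ei.mulVec (v w₀)) i + ((Wi w₀).mulVec v') i with hzi_def
  set zg := (Eg.mulVec (v w₀)) i + ((Wg w₀).mulVec v') i with hzg_def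
  set zo := (Eo.mulVec (v w₀)) i + ((Wo w₀).mulVec v') i with hzo_def
  -- derivatives of the gates
  have hfd : HasDerivAt (fun w => f w i) (f w₀ i * (1 - f w₀ i) * zf) w₀ := by
    have := (hasDerivAt_sigmoid (((Wf w₀).mulVec (v w₀)) i + bf i)).comp w₀
      (hzf.add_const (bf i))
    simp only [hf]
    simpa [Function.comp_def, (hf w₀ i).symm, mul_comm] using this
  have hid : HasDerivAt (fun w => iGate w i) (iGate w₀ i * (1 - iGate w₀ i) * zi) w₀ := by
    have := (hasDerivAt_sigmoid (((Wi w₀).mulVec (v w₀)) i + bi i)).comp w₀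
      (hzi.add_const (bi i))
    simp only [hi]
    simpa [Function.comp_def, (hi w₀ i).symm, mul_comm] using this
  have hgd : HasDerivAt (fun w => g w i) ((1 - (g w₀ i) ^ 2) * zg) w₀ := by
    have := (hasDerivAt_tanh (((Wg w₀).mulVec (v w₀)) i + bg i)).comp w₀
      (hzg.add_const (bg i))
    simp only [hg]
    simpa [Function.comp_def, (hg w₀ i).symm, mul_comm] using this
  have hod : HasDerivAt (fun w => o w i) (o w₀ i * (1 - o w₀ i) * zo) w₀ := by
    have := (hasDerivAt_sigmoid (((Wo w₀).mulVec (v w₀)) i + bo i)).comp w₀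
      (hzo.add_const (bo i))
    simp only [ho]
    simpa [Function.comp_def, (ho w₀ i).symm, mul_comm] using this
  -- derivative of the cell state
  have hcd : HasDerivAt (fun w => c w i)
      (f w₀ i * (1 - f w₀ i) * zf * cprev w₀ i + f w₀ i * c' i
        + iGate w₀ i * (1 - iGate w₀ i) * zi * g w₀ i
        + iGate w₀ i * ((1 - (g w₀ i) ^ 2) * zg)) w₀ := by
    simp only [hc]
    exact ((hfd.mul (hcprev i)).add (hid.mul hgd)).congr_deriv (by ring)
  -- derivative of the hidden state
  have htc : HasDerivAt (fun w => Real.tanh (c w i))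
      ((1 - Real.tanh (c w₀ i) ^ 2) *
        (f w₀ i * (1 - f w₀ i) * zf * cprev w₀ i + f w₀ i * c' i
          + iGate w₀ i * (1 - iGate w₀ i) * zi * g w₀ i
          + iGate w₀ i * ((1 - (g w₀ i) ^ 2) * zg))) w₀ := by
    simpa [Function.comp_def] using (hasDerivAt_tanh (c w₀ i)).comp w₀ hcd
  have hhd := (hod.mul htc)
  have hmain : HasDerivAt (fun w => h w i)
      (o w₀ i * (1 - o w₀ i) * zo * Real.tanh (c w₀ i)
        + o w₀ i * ((1 - Real.tanh (c w₀ i) ^ 2) *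
          (f w₀ i * (1 - f w₀ i) * zf * cprev w₀ i + f w₀ i * c' i
            + iGate w₀ i * (1 - iGate w₀ i) * zi * g w₀ i
            + iGate w₀ i * ((1 - (g w₀ i) ^ 2) * zg)))) w₀ := by
    simp only [hh]
    exact hhd
  convert hmain using 1
  simp only [hF', hψ', hkvec', hΔc, hΔo, hψ, hkvec, hzf_def, hzi_def, hzg_def, hzo_def,
    Matrix.add_mulVec, ← Matrix.mulVec_mulVec, Matrix.mulVec_diagonal, Pi.add_apply]
  ring
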